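/- Let f ≥ 1 and w ≥ 2 be natural numbers, s > 0, α ∈ ℝ, and N ∈ ℕ with N ≥ w. Let T : ℝ → ℝ^f be continuous and injective. Set t_i = α + (i−1)·s for 1 ≤ i ≤ N, and w_s = (w−1)·s. For 1 ≤ i ≤ N − w + 1 let v_i ∈ ℝ^{w·f} be the concatenation (T(t_i), T(t_{i+1}), …, T(t_{i+w−1})). Let a_1, …, a_n ∈ ℝ be finitely many event start times (n ≥ 1) and set y_i = max_{1 ≤ k ≤ n} J_{w_s, a_k}(t_i). Then for every ε > 0 there exist Q ∈ ℕ, coefficients β_1, …, β_Q ∈ ℝ, weight vectors u_1, …, u_Q ∈ ℝ^{w·f}, and biases b_1, …, b_Q ∈ ℝ such that |∑_{j=1}^{Q} β_j σ(⟨u_j, v_i⟩ + b_j) − y_i| < ε for every i with 1 ≤ i ≤ N − w + 1. -/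

import Mathlib

/-- The logistic sigmoid squashing function `σ(u) = 1/(1 + e^{-u})`. -/
noncomputable def sigmoid (u : ℝ) : ℝ := 1 / (1 + Real.exp (-u))

/-- The overlap (Jaccard similarity) function `J_{L,a}(t)`, measuring the Jaccard similarity
of the length-`L` intervals `[t, t+L]` and `[a, a+L]`. -/
noncomputable def overlapJ (L a t : ℝ) : ℝ :=
  if |t - a| < L then (L - |t - a|) / (L + |t - a|) else 0

open Filter MeasureTheory in
lemma sigmoid_tendsto_atTop : Filter.Tendsto sigmoid Filter.atTop (nhds 1) := by
  have h : Tendsto (fun u : ℝ => Real.exp (-u)) atTop (nhds 0) :=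
    Real.tendsto_exp_atBot.comp tendsto_neg_atTop_atBot
  have h2 : Filter.Tendsto (fun u : ℝ => (1:ℝ) / (1 + Real.exp (-u))) atTop (nhds (1 / (1 + 0))) :=
    Filter.Tendsto.div tendsto_const_nhds (tendsto_const_nhds.add h) (by norm_num)
  have h3 : Filter.Tendsto sigmoid atTop (nhds (1 / (1 + 0))) := h2
  norm_num at h3
  exact h3

open Filter MeasureTheory in
lemma sigmoid_tendsto_atBot : Filter.Tendsto sigmoid Filter.atBot (nhds 0) := by
  have h : Tendsto (fun u : ℝ => 1 + Real.exp (-u)) atBot atTop :=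
    tendsto_atTop_add_const_left _ 1 (Real.tendsto_exp_atTop.comp tendsto_neg_atBot_atTop)
  exact h.inv_tendsto_atTop.congr (fun u => by simp [sigmoid, one_div])

open Filter MeasureTheory in
lemma sigmoid_mul_tendsto_pos {d : ℝ} (hd : 0 < d) :
    Filter.Tendsto (fun K : ℝ => sigmoid (K * d)) Filter.atTop (nhds 1) :=
  sigmoid_tendsto_atTop.comp (tendsto_id.atTop_mul_const hd)

open Filter MeasureTheory in
lemma sigmoid_mul_tendsto_neg {d : ℝ} (hd : d < 0) :
    Filter.Tendsto (fun K : ℝ => sigmoid (K * d)) Filter.atTop (nhds 0) :=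
  sigmoid_tendsto_atBot.comp (tendsto_id.atTop_mul_const_of_neg hd)

open Filter MeasureTheory in
/-- There is a linear functional not vanishing on any of finitely many nonzero vectors. -/
lemma exists_separating_vector {d : ℕ} (P : Finset (EuclideanSpace ℝ (Fin d)))
    (hP : ∀ q ∈ P, q ≠ 0) :
    ∃ c : EuclideanSpace ℝ (Fin d), ∀ q ∈ P, inner ℝ c q ≠ (0:ℝ) := by
  have h0 : ∀ q ∈ P, volume (((ℝ ∙ q)ᗮ : Submodule ℝ (EuclideanSpace ℝ (Fin d))) : Set (EuclideanSpace ℝ (Fin d))) = 0 := by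
    intro q hq
    refine Measure.addHaar_submodule _ _ ?_
    intro htop
    have : q ∈ (ℝ ∙ q)ᗮ := htop ▸ Submodule.mem_top
    rw [Submodule.mem_orthogonal_singleton_iff_inner_right] at this
    exact hP q hq (inner_self_eq_zero.mp this)
  have hU : volume (⋃ q ∈ P, (((ℝ ∙ q)ᗮ : Submodule ℝ (EuclideanSpace ℝ (Fin d))) : Set (EuclideanSpace ℝ (Fin d)))) = 0 :=
    (measure_biUnion_null_iff P.countable_toSet).mpr h0
  have hne : (⋃ q ∈ P, (((ℝ ∙ q)ᗮ : Submodule ℝ (EuclideanSpace ℝ (Fin d))) : Set (EuclideanSpace ℝ (Fin d)))) ≠ Set.univ := by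
    intro h
    rw [h] at hU
    exact isOpen_univ.measure_ne_zero volume Set.univ_nonempty hU
  obtain ⟨c, hc⟩ := Set.ne_univ_iff_exists_notMem _ |>.mp hne
  refine ⟨c, fun q hq hinner => hc ?_⟩
  refine Set.mem_biUnion hq ?_
  exact Submodule.mem_orthogonal_singleton_iff_inner_left.mpr hinner

/-- The paper's Theorem 1 instantiated with concrete overlapping-partition vectors `v i`
(concatenations of `w` consecutive samples of the time series `T`) and
overlapping-parameter targets `y i = max_k J_{w_s, a_k}(t_i)`: a one-hidden-layer sigmoid
network approximates the targets within `ε` on all partitions. -/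
theorem universal_event_detection
    (f w : ℕ) (hf : 1 ≤ f) (hw : 2 ≤ w)
    (s : ℝ) (hs : 0 < s) (α : ℝ) (N : ℕ) (hN : w ≤ N)
    (T : ℝ → EuclideanSpace ℝ (Fin f)) (hT : Continuous T) (hTinj : Function.Injective T)
    (t : ℕ → ℝ) (ht : ∀ i : ℕ, t i = α + ((i : ℝ) - 1) * s)
    (v : ℕ → EuclideanSpace ℝ (Fin (w * f)))
    (hv : ∀ i : ℕ, ∀ j : Fin (w * f),
      v i j = T (t (i + j.val / f)) ⟨j.val % f, Nat.mod_lt _ (by omega)⟩)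
    (n : ℕ) (hn : 1 ≤ n) (a : Fin n → ℝ)
    (y : ℕ → ℝ)
    (hy : ∀ i : ℕ, y i = Finset.univ.sup' ⟨⟨0, hn⟩, Finset.mem_univ _⟩
      (fun k : Fin n => overlapJ (((w : ℝ) - 1) * s) (a k) (t i)))
    (ε : ℝ) (hε : 0 < ε) :
    ∃ (Q : ℕ) (β : Fin Q → ℝ) (u : Fin Q → EuclideanSpace ℝ (Fin (w * f))) (b : Fin Q → ℝ),
      ∀ i : ℕ, 1 ≤ i → i ≤ N - w + 1 →
        |(∑ j : Fin Q, β j * sigmoid ((inner ℝ (u j) (v i) : ℝ) + b j)) - y i| < ε := by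
  classical
  open Filter in
  -- the time points are injective
  have htinj : Function.Injective t := by
    intro i i' h
    rw [ht, ht] at h
    have : (i : ℝ) = (i' : ℝ) := by
      have := mul_right_cancel₀ hs.ne' (by linarith : ((i:ℝ) - 1) * s = ((i':ℝ) - 1) * s)
      linarith
    exact_mod_cast this
  -- the partition vectors are injective
  have hvinj : Function.Injective v := by
    intro i i' h
    apply htinj
    apply hTinj
    ext p
    have hpf : (p : ℕ) < w * f := lt_of_lt_of_le p.2 (Nat.le_mul_of_pos_left f (by omega))
    have h1 := hv i ⟨p.val, hpf⟩
    have h2 := hv i' ⟨p.val, hpf⟩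
    have hdiv : (p : ℕ) / f = 0 := Nat.div_eq_of_lt p.2
    have hmod : (p : ℕ) % f = (p : ℕ) := Nat.mod_eq_of_lt p.2
    have hfin : (⟨(p:ℕ) % f, Nat.mod_lt _ (by omega)⟩ : Fin f) = p := Fin.ext hmod
    rw [hdiv, hfin] at h1 h2
    simp only [Nat.add_zero] at h1 h2
    calc T (t i) p = v i ⟨p.val, hpf⟩ := h1.symm
      _ = v i' ⟨p.val, hpf⟩ := by rw [h]
      _ = T (t i') p := h2
  set S : Finset ℕ := Finset.Icc 1 (N - w + 1) with hS
  -- choose a separating direction c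
  obtain ⟨c, hc⟩ := exists_separating_vector
    (((S ×ˢ S).filter (fun p => p.1 ≠ p.2)).image (fun p => v p.1 - v p.2))
    (by
      intro q hq
      simp only [Finset.mem_image, Finset.mem_filter] at hq
      obtain ⟨⟨i, i'⟩, ⟨_, hne⟩, rfl⟩ := hq
      exact sub_ne_zero.mpr (fun h => hne (hvinj h)))
  set x : ℕ → ℝ := fun i => (inner ℝ c (v i) : ℝ) with hx
  have hxinj : ∀ i ∈ S, ∀ i' ∈ S, i ≠ i' → x i ≠ x i' := by
    intro i hi i' hi' hne heq
    have hmem : v i - v i' ∈ ((S ×ˢ S).filter (fun p => p.1 ≠ p.2)).image (fun p => v p.1 - v p.2) := by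
      refine Finset.mem_image.mpr ⟨(i, i'), ?_, rfl⟩
      simp [Finset.mem_filter, Finset.mem_product, hi, hi', hne]
    exact hc _ hmem (by rw [inner_sub_right]; simpa [hx] using sub_eq_zero.mpr heq)
  -- choose the gap δ
  obtain ⟨δ, hδpos, hδlt⟩ : ∃ δ : ℝ, 0 < δ ∧ ∀ i ∈ S, ∀ i' ∈ S, i ≠ i' → δ < |x i - x i'| := by
    set P' := (S ×ˢ S).filter (fun p => p.1 ≠ p.2) with hP'
    by_cases hne : P'.Nonempty
    · have hpos : 0 < P'.inf' hne (fun p => |x p.1 - x p.2|) := by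
        rw [Finset.lt_inf'_iff]
        rintro ⟨i, i'⟩ hp
        simp only [hP', Finset.mem_filter, Finset.mem_product] at hp
        exact abs_pos.mpr (sub_ne_zero.mpr (hxinj _ hp.1.1 _ hp.1.2 hp.2))
      refine ⟨P'.inf' hne (fun p => |x p.1 - x p.2|) / 2, by linarith, ?_⟩
      intro i hi i' hi' hne'
      have hmem : (i, i') ∈ P' := by
        simp only [hP', Finset.mem_filter, Finset.mem_product]
        exact ⟨⟨hi, hi'⟩, hne'⟩
      have h1 : P'.inf' hne (fun p => |x p.1 - x p.2|) ≤ |x i - x i'| :=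
        Finset.inf'_le _ hmem
      linarith
    · refine ⟨1, one_pos, fun i hi i' hi' hne' => absurd ?_ (fun h => hne ⟨(i,i'), h⟩)⟩
      exact Finset.mem_filter.mpr ⟨Finset.mem_product.mpr ⟨hi, hi'⟩, hne'⟩
  -- enumerate S
  set m : ℕ := S.card with hm
  set e : S ≃ Fin m := S.equivFin with he
  set ι : Fin m → ℕ := fun k => ((e.symm k : S) : ℕ) with hι
  have hιS : ∀ k, ι k ∈ S := fun k => (e.symm k).2
  have hιinj : Function.Injective ι := fun k k' h =>
    e.symm.injective (Subtype.ext h)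
  -- the network family
  set F : ℝ → ℕ → ℝ := fun K i => ∑ k : Fin m,
    (y (ι k) * sigmoid (K * (x i - x (ι k) + δ)) + (-(y (ι k))) * sigmoid (K * (x i - x (ι k) - δ)))
    with hF
  -- pointwise limits
  have hlim : ∀ i ∈ S, Tendsto (fun K => F K i) atTop (nhds (y i)) := by
    intro i hi
    set k₀ : Fin m := e ⟨i, hi⟩ with hk₀
    have hιk₀ : ι k₀ = i := by simp [hι, hk₀]
    have : Tendsto (fun K => F K i) atTop
        (nhds (∑ k : Fin m, if k = k₀ then y i else 0)) := by
      apply tendsto_finset_sum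
      intro k _
      by_cases hk : k = k₀
      · subst hk
        rw [if_pos rfl]
        have hz : x i - x (ι k₀) = 0 := by rw [hιk₀]; ring
        have h1 : Tendsto (fun K : ℝ => sigmoid (K * (x i - x (ι k₀) + δ))) atTop (nhds 1) :=
          sigmoid_mul_tendsto_pos (by rw [hz]; linarith)
        have h2 : Tendsto (fun K : ℝ => sigmoid (K * (x i - x (ι k₀) - δ))) atTop (nhds 0) :=
          sigmoid_mul_tendsto_neg (by rw [hz]; linarith)
        have := (h1.const_mul (y (ι k₀))).add (h2.const_mul (-(y (ι k₀))))
        simpa [hιk₀] using this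
      · rw [if_neg hk]
        have hne : ι k ≠ i := fun h => hk (by rw [← hιk₀] at h; exact hιinj h)
        have hgap : δ < |x i - x (ι k)| := hδlt i hi (ι k) (hιS k) (Ne.symm hne)
        rcases lt_or_gt_of_ne (sub_ne_zero.mpr (hxinj i hi (ι k) (hιS k) (Ne.symm hne))) with hlt | hgt
        · -- x i - x (ι k) < 0 ; both arguments negative
          have habs : x i - x (ι k) < -δ := by
            rw [abs_of_neg hlt] at hgap; linarith
          have h1 : Tendsto (fun K : ℝ => sigmoid (K * (x i - x (ι k) + δ))) atTop (nhds 0) :=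
            sigmoid_mul_tendsto_neg (by linarith)
          have h2 : Tendsto (fun K : ℝ => sigmoid (K * (x i - x (ι k) - δ))) atTop (nhds 0) :=
            sigmoid_mul_tendsto_neg (by linarith)
          have := (h1.const_mul (y (ι k))).add (h2.const_mul (-(y (ι k))))
          simpa using this
        · have habs : δ < x i - x (ι k) := by
            rw [abs_of_pos hgt] at hgap; linarith
          have h1 : Tendsto (fun K : ℝ => sigmoid (K * (x i - x (ι k) + δ))) atTop (nhds 1) :=
            sigmoid_mul_tendsto_pos (by linarith)
          have h2 : Tendsto (fun K : ℝ => sigmoid (K * (x i - x (ι k) - δ))) atTop (nhds 1) :=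
            sigmoid_mul_tendsto_pos (by linarith)
          have := (h1.const_mul (y (ι k))).add (h2.const_mul (-(y (ι k))))
          simpa using this
    simpa [Finset.sum_ite_eq' Finset.univ k₀ (fun _ => y i)] using this
  -- choose K large
  have hev : ∀ᶠ K in atTop, ∀ i ∈ S, |F K i - y i| < ε := by
    rw [Filter.eventually_all_finset]
    intro i hi
    have := hlim i hi
    rw [Metric.tendsto_nhds] at this
    filter_upwards [this ε hε] with K hK
    simpa [Real.dist_eq] using hK
  obtain ⟨K, hK⟩ := hev.exists
  -- build the network
  refine ⟨m + m,
    Fin.append (fun k => y (ι k)) (fun k => -(y (ι k))),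
    fun _ => K • c,
    Fin.append (fun k => K * (δ - x (ι k))) (fun k => K * (-δ - x (ι k))), ?_⟩
  intro i hi1 hi2
  have hiS : i ∈ S := Finset.mem_Icc.mpr ⟨hi1, hi2⟩
  have hinner : (inner ℝ (K • c) (v i) : ℝ) = K * x i := by
    rw [real_inner_smul_left]
  have hsum : (∑ j : Fin (m + m),
      Fin.append (fun k => y (ι k)) (fun k => -(y (ι k))) j *
        sigmoid ((inner ℝ ((fun _ : Fin (m+m) => K • c) j) (v i) : ℝ) +
          Fin.append (fun k => K * (δ - x (ι k))) (fun k => K * (-δ - x (ι k))) j)) = F K i := by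
    rw [Fin.sum_univ_add]
    have hFeq : F K i = ∑ k : Fin m, y (ι k) * sigmoid (K * (x i - x (ι k) + δ))
        + ∑ k : Fin m, -y (ι k) * sigmoid (K * (x i - x (ι k) - δ)) := by
      rw [hF]
      exact Finset.sum_add_distrib
    rw [hFeq]
    congr 1
    · apply Finset.sum_congr rfl
      intro k _
      rw [Fin.append_left, Fin.append_left, hinner]
      ring_nf
    · apply Finset.sum_congr rfl
      intro k _
      rw [Fin.append_right, Fin.append_right, hinner]
      ring_nf
  rw [hsum]
  exact hK i hiS
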